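/- Let n ≥ 2, m ≥ 1 be integers and c₁ > 0. There exist a constant C > 0 and a positive integer N ≥ 3 such that: for every integer k with |k| ≥ N, every t ∈ [−π/2, 3π/2), and every λ ∈ ℂ with |λ − (2πk + t)^n| ≤ c₁ |k|^{n−1−1/(2m)}, one has Σ_{p ∈ ℤ, p ∉ A(k,n,t)} |k|^{2n−4} / |λ − (2πp + t)^n|² ≤ C (ln|k|)² / k². -/

import Mathlib

open Real

/-- The set `T(k) = [−π/2, 3π/2) \ ((−1/ln|k|, 1/ln|k|) ∪ (π − 1/ln|k|, π + 1/ln|k|))`. -/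
def Tset (k : ℤ) : Set ℝ :=
  Set.Ico (-(π/2)) (3*π/2) \
    (Set.Ioo (-(Real.log |(k:ℝ)|)⁻¹) (Real.log |(k:ℝ)|)⁻¹ ∪
      Set.Ioo (π - (Real.log |(k:ℝ)|)⁻¹) (π + (Real.log |(k:ℝ)|)⁻¹))

open Classical in
/-- The set `A(k,n,t) ⊆ ℤ`: equal to `{k}` if `n` is odd, or if `n` is even and
`t ∈ T(k)`; equal to `{k, −k}` if `n` is even and `|t| < 1/ln|k|`; and equal to
`{k, −(k+1)}` if `n` is even and `|t − π| < 1/ln|k|`. -/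
noncomputable def Aset (n : ℕ) (k : ℤ) (t : ℝ) : Set ℤ :=
  if Odd n then {k}
  else if |t| < (Real.log |(k:ℝ)|)⁻¹ then {k, -k}
  else if |t - π| < (Real.log |(k:ℝ)|)⁻¹ then {k, -(k+1)}
  else {k}


lemma k_mem_Aset (n : ℕ) (k : ℤ) (t : ℝ) : k ∈ Aset n k t := by
  unfold Aset; split_ifs <;> simp

lemma not_mem_Aset_neg (n : ℕ) (k : ℤ) (t : ℝ) (hn : ¬ Odd n) (hp : (-k) ∉ Aset n k t) :
    (Real.log |(k:ℝ)|)⁻¹ ≤ |t| := by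
  unfold Aset at hp; rw [if_neg hn] at hp
  by_contra h; push_neg at h
  rw [if_pos h] at hp; simp at hp

lemma not_mem_Aset_negk1 (n : ℕ) (k : ℤ) (t : ℝ) (hn : ¬ Odd n)
    (hL : 1 ≤ Real.log |(k:ℝ)|) (hp : (-(k+1)) ∉ Aset n k t) :
    (Real.log |(k:ℝ)|)⁻¹ ≤ |t - π| := by
  have hπ := Real.pi_gt_three
  unfold Aset at hp; rw [if_neg hn] at hp
  have hL0 : (0:ℝ) < Real.log |(k:ℝ)| := by linarith
  have hinv : (Real.log |(k:ℝ)|)⁻¹ ≤ 1 := by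
    rw [inv_le_one_iff₀]; right; exact hL
  by_cases h1 : |t| < (Real.log |(k:ℝ)|)⁻¹
  · have h2 : π - |t| ≤ |t - π| := by
      rw [abs_sub_comm]
      have h3 := abs_sub_abs_le_abs_sub π t
      rw [abs_of_nonneg Real.pi_pos.le] at h3
      linarith
    linarith
  · rw [if_neg h1] at hp
    by_contra h2; push_neg at h2
    rw [if_pos h2] at hp; simp at hp



lemma aux_pow_sub (a b : ℝ) (hb : 0 ≤ b) (hba : b ≤ a) (n : ℕ) (hn : 1 ≤ n) :
    (a - b) * a ^ (n - 1) ≤ a ^ n - b ^ n := by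
  have ha : 0 ≤ a := hb.trans hba
  have h1 : b ^ n ≤ b * a ^ (n - 1) := by
    calc b ^ n = b * b ^ (n-1) := by rw [← pow_succ']; congr 1; omega
    _ ≤ b * a ^ (n-1) := mul_le_mul_of_nonneg_left (pow_le_pow_left₀ hb hba _) hb
  have h2 : a ^ n = a * a ^ (n - 1) := by rw [← pow_succ']; congr 1; omega
  nlinarith [pow_nonneg ha (n-1)]

lemma min_le_abs_abs (x y : ℝ) : min |y - x| |y + x| ≤ |(|y| - |x|)| := by
  rcases le_total 0 x with hx | hx <;> rcases le_total 0 y with hy | hy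
  · rw [abs_of_nonneg hx, abs_of_nonneg hy]; exact min_le_left _ _
  · rw [abs_of_nonneg hx, abs_of_nonpos hy, show -y - x = -(y+x) by ring, abs_neg]
    exact min_le_right _ _
  · rw [abs_of_nonpos hx, abs_of_nonneg hy, show y - -x = y + x by ring]
    exact min_le_right _ _
  · rw [abs_of_nonpos hx, abs_of_nonpos hy, show -y - -x = -(y - x) by ring, abs_neg]
    exact min_le_left _ _

lemma key_even_aux (n : ℕ) (hn : 1 ≤ n) (he : Even n) (x y : ℝ) (h : |x| ≤ |y|) :
    min |y - x| |y + x| * max |x| |y| ^ (n-1) ≤ |y ^ n - x ^ n| := by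
  have h1 : |y| ^ n = y ^ n := he.pow_abs y
  have h1' : |x| ^ n = x ^ n := he.pow_abs x
  have hmax : max |x| |y| = |y| := max_eq_right h
  have h2 : |y ^ n - x ^ n| = |y| ^ n - |x| ^ n := by
    rw [← h1, ← h1']
    exact abs_of_nonneg (sub_nonneg.2 (pow_le_pow_left₀ (abs_nonneg x) h n))
  rw [hmax, h2]
  calc min |y - x| |y + x| * |y| ^ (n-1)
      ≤ |(|y| - |x|)| * |y| ^ (n-1) :=
        mul_le_mul_of_nonneg_right (min_le_abs_abs x y) (pow_nonneg (abs_nonneg y) _)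
    _ = (|y| - |x|) * |y| ^ (n-1) := by rw [abs_of_nonneg (sub_nonneg.2 h)]
    _ ≤ |y| ^ n - |x| ^ n := aux_pow_sub _ _ (abs_nonneg x) h n hn

lemma key_even (n : ℕ) (hn : 1 ≤ n) (he : Even n) (x y : ℝ) :
    min |y - x| |y + x| * max |x| |y| ^ (n-1) ≤ |y ^ n - x ^ n| := by
  rcases le_total |x| |y| with h | h
  · exact key_even_aux n hn he x y h
  · have := key_even_aux n hn he y x h
    rw [abs_sub_comm x y, abs_sub_comm (x^n) (y^n), add_comm x y, max_comm |y| |x|] at this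
    exact this

lemma key_odd_aux (n : ℕ) (hn : 1 ≤ n) (x y : ℝ) (hx : 0 ≤ x) (hy : 0 ≤ y) :
    |y - x| * max |x| |y| ^ (n-1) ≤ 2 * |y ^ n - x ^ n| := by
  rcases le_total x y with h | h
  · have := aux_pow_sub y x hx h n hn
    rw [abs_of_nonneg (sub_nonneg.2 h), abs_of_nonneg (sub_nonneg.2 (pow_le_pow_left₀ hx h n)),
      abs_of_nonneg hx, abs_of_nonneg hy, max_eq_right h]
    nlinarith [pow_nonneg hy (n-1)]
  · have := aux_pow_sub x y hy h n hn
    rw [abs_of_nonpos (sub_nonpos.2 h), abs_of_nonpos (sub_nonpos.2 (pow_le_pow_left₀ hy h n)),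
      abs_of_nonneg hx, abs_of_nonneg hy, max_eq_left h]
    nlinarith [pow_nonneg hx (n-1)]

lemma key_odd_aux2 (n : ℕ) (hn : 1 ≤ n) (ho : Odd n) (x y : ℝ) (hx : x ≤ 0) (hy : 0 ≤ y) :
    |y - x| * max |x| |y| ^ (n-1) ≤ 2 * |y ^ n - x ^ n| := by
  -- opposite signs: |y^n - x^n| = y^n - x^n = y^n + (-x)^n ≥ max^n
  have hxn : x ^ n ≤ 0 := ho.pow_nonpos hx
  have hyn : 0 ≤ y ^ n := pow_nonneg hy n
  have hax : |x| = -x := abs_of_nonpos hx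
  have hay : |y| = y := abs_of_nonneg hy
  have habs : |y ^ n - x ^ n| = y ^ n - x ^ n := abs_of_nonneg (by linarith)
  have hxn' : (-x) ^ n = -(x ^ n) := ho.neg_pow x
  set M := max |x| |y| with hM
  have hM0 : 0 ≤ M := le_max_of_le_right (abs_nonneg y)
  have hMn : M ^ n = M * M ^ (n-1) := by rw [← pow_succ']; congr 1; omega
  have hMx : (-x) ^ n ≤ M ^ n := pow_le_pow_left₀ (by linarith) (by rw [← hax]; exact le_max_left _ _) n
  have hMy : y ^ n ≤ M ^ n := pow_le_pow_left₀ hy (by rw [← hay]; exact le_max_right _ _) n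
  have h1 : M ^ n ≤ y ^ n - x ^ n := by
    rcases le_total |x| |y| with h | h
    · rw [hM, max_eq_right h, hay]; linarith
    · rw [hM, max_eq_left h, hax, hxn']; linarith
  have h2 : |y - x| ≤ 2 * M := by
    rw [abs_of_nonneg (by linarith)]
    have := le_max_left |x| |y|
    have := le_max_right |x| |y|
    rw [hax] at *; rw [hay] at *; linarith
  calc |y - x| * M ^ (n-1) ≤ 2 * M * M ^ (n-1) :=
        mul_le_mul_of_nonneg_right h2 (pow_nonneg hM0 _)
    _ = 2 * M ^ n := by rw [hMn]; ring
    _ ≤ 2 * |y ^ n - x ^ n| := by rw [habs]; linarith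

lemma key_odd (n : ℕ) (hn : 1 ≤ n) (ho : Odd n) (x y : ℝ) :
    |y - x| * max |x| |y| ^ (n-1) ≤ 2 * |y ^ n - x ^ n| := by
  rcases le_total 0 x with hx | hx <;> rcases le_total 0 y with hy | hy
  · exact key_odd_aux n hn x y hx hy
  · have := key_odd_aux2 n hn ho y x hy hx
    rw [abs_sub_comm x y, abs_sub_comm (x^n) (y^n), max_comm |y| |x|] at this
    exact this
  · exact key_odd_aux2 n hn ho x y hx hy
  · -- both nonpos : apply aux to -x -y
    have := key_odd_aux n hn (-x) (-y) (by linarith) (by linarith)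
    rw [ho.neg_pow x, ho.neg_pow y, abs_neg, abs_neg,
      show (-y) - (-x) = -(y - x) by ring] at this
    rw [show -y ^ n - -x ^ n = -(y ^ n - x ^ n) by ring] at this
    rwa [abs_neg, abs_neg] at this


lemma base_summable : Summable (fun q : ℤ => ((1 + |(q:ℝ)|)⁻¹) ^ 2) := by
  have h1 : Summable (fun q : ℤ => 1 / (q:ℝ) ^ 2) :=
    (Real.summable_one_div_int_pow).2 one_lt_two
  have h2 : Summable (fun q : ℤ => if q = 0 then (1:ℝ) else 0) := by
    apply summable_of_ne_finset_zero (s := {0})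
    intro b hb
    simp at hb ⊢
    exact fun h => absurd h hb
  apply Summable.of_nonneg_of_le (fun q => by positivity) _ (h1.add h2)
  intro q
  rcases eq_or_ne q 0 with rfl | hq
  · norm_num
  · have hq1 : (1:ℝ) ≤ |(q:ℝ)| := by
      rw [← Int.cast_abs]; exact_mod_cast Int.one_le_abs hq
    have : ((1 + |(q:ℝ)|)⁻¹) ^ 2 ≤ (|(q:ℝ)|⁻¹) ^ 2 := by
      gcongr
      linarith
    simp only [if_neg hq, add_zero]
    calc ((1 + |(q:ℝ)|)⁻¹) ^ 2 ≤ (|(q:ℝ)|⁻¹) ^ 2 := this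
      _ = 1 / (q:ℝ) ^ 2 := by rw [inv_pow, sq_abs, one_div]

noncomputable def dd (k p : ℤ) : ℝ := min |(p:ℝ) - (k:ℝ)| |(p:ℝ) + (k:ℝ)|

lemma dd_nonneg (k p : ℤ) : 0 ≤ dd k p := le_min (abs_nonneg _) (abs_nonneg _)


set_option maxHeartbeats 2000000 in
/-- Let `n ≥ 2, m ≥ 1` be integers and `c₁ > 0`. There exist a constant
`C > 0` and a positive integer `N ≥ 3` such that: for every integer `k` with `|k| ≥ N`,
every `t ∈ [−π/2, 3π/2)`, and every `λ ∈ ℂ` with `|λ − (2πk + t)^n| ≤ c₁ |k|^{n−1−1/(2m)}`,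
one has `Σ_{p ∈ ℤ, p ∉ A(k,n,t)} |k|^{2n−4} / |λ − (2πp + t)^n|² ≤ C (ln|k|)² / k²`. -/
theorem stmt_7 (n m : ℕ) (hn : 2 ≤ n) (hm : 1 ≤ m) (c₁ : ℝ) (hc₁ : 0 < c₁) :
    ∃ C : ℝ, 0 < C ∧ ∃ N : ℕ, 3 ≤ N ∧
      ∀ k : ℤ, (N : ℤ) ≤ |k| →
        ∀ t ∈ Set.Ico (-(π/2)) (3*π/2),
          ∀ lam : ℂ,
            ‖lam - ((2*π*(k:ℝ) + t : ℝ) : ℂ)^n‖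
              ≤ c₁ * |(k:ℝ)| ^ ((n:ℝ) - 1 - 1/(2*(m:ℝ))) →
            Summable (fun p : {p : ℤ // p ∉ Aset n k t} =>
              |(k:ℝ)|^(2*n-4) / ‖lam - ((2*π*(p.1:ℝ) + t : ℝ) : ℂ)^n‖^2) ∧
            (∑' p : {p : ℤ // p ∉ Aset n k t},
                |(k:ℝ)|^(2*n-4) / ‖lam - ((2*π*(p.1:ℝ) + t : ℝ) : ℂ)^n‖^2)
              ≤ C * (Real.log |(k:ℝ)|)^2 / (k:ℝ)^2 := by
  have hπ := Real.pi_gt_three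
  have hr : (0:ℝ) < 1/(2*(m:ℝ)) := by positivity
  have hev : ∀ᶠ x : ℝ in Filter.atTop, ‖Real.log x‖ ≤ (2/c₁) * ‖x ^ (1/(2*(m:ℝ)))‖ :=
    (isLittleO_log_rpow_atTop hr).bound (by positivity)
  obtain ⟨x₀, hx₀⟩ := Filter.eventually_atTop.1 hev
  have hS0 : (0:ℝ) ≤ ∑' q : ℤ, ((1 + |(q:ℝ)|)⁻¹) ^ 2 := tsum_nonneg fun q => by positivity
  set S : ℝ := ∑' q : ℤ, ((1 + |(q:ℝ)|)⁻¹) ^ 2 with hSdef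
  refine ⟨2*S + 1, by linarith, max 3 ⌈x₀⌉₊, le_max_left _ _, ?_⟩
  intro k hk t ht lam hlam
  set K := |(k:ℝ)| with hKdef
  have hKabs : K = ((|k| : ℤ) : ℝ) := by rw [hKdef, Int.cast_abs]
  have hK3 : (3:ℝ) ≤ K := by
    rw [hKabs]
    have h1 : ((max 3 ⌈x₀⌉₊ : ℕ) : ℤ) ≤ |k| := hk
    have h2 : (3:ℤ) ≤ ((max 3 ⌈x₀⌉₊ : ℕ) : ℤ) := by exact_mod_cast le_max_left 3 ⌈x₀⌉₊
    exact_mod_cast h2.trans h1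
  have hK0 : (0:ℝ) < K := by linarith
  have hKx₀ : x₀ ≤ K := by
    rw [hKabs]
    have h1 : x₀ ≤ (⌈x₀⌉₊ : ℝ) := Nat.le_ceil x₀
    have h2 : ((⌈x₀⌉₊ : ℕ) : ℤ) ≤ |k| :=
      le_trans (by exact_mod_cast le_max_right 3 ⌈x₀⌉₊) hk
    have h3 : ((⌈x₀⌉₊ : ℕ) : ℝ) ≤ ((|k| : ℤ) : ℝ) := by exact_mod_cast h2
    linarith
  have hlog1 : 1 ≤ Real.log K := by
    rw [Real.le_log_iff_exp_le hK0]
    have := Real.exp_one_lt_d9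
    linarith
  set L := Real.log K with hLdef
  have hL0 : (0:ℝ) < L := lt_of_lt_of_le one_pos hlog1
  have hcond : c₁ * L ≤ 2 * K ^ (1/(2*(m:ℝ))) := by
    have h := hx₀ K hKx₀
    rw [Real.norm_eq_abs, Real.norm_eq_abs, abs_of_nonneg (by linarith : (0:ℝ) ≤ Real.log K),
      abs_of_nonneg (Real.rpow_nonneg hK0.le _)] at h
    calc c₁ * L ≤ c₁ * (2/c₁ * K ^ (1/(2*(m:ℝ)))) := by
          exact mul_le_mul_of_nonneg_left h hc₁.le
      _ = 2 * K ^ (1/(2*(m:ℝ))) := by field_simp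
  have ht1 : -(π/2) ≤ t := ht.1
  have ht2 : t < 3*π/2 := ht.2
  have htabs : |t| ≤ 3*π/2 := abs_le.2 ⟨by linarith, by linarith⟩
  set x := 2*π*(k:ℝ) + t with hxdef
  have hxlb : 4*K ≤ |x| := by
    have h1 : |2*π*(k:ℝ)| ≤ |x| + |t| := by
      calc |2*π*(k:ℝ)| = |x - t| := by rw [hxdef]; ring_nf
        _ ≤ |x| + |t| := abs_sub _ _
    have h2 : |2*π*(k:ℝ)| = 2*π*K := by
      rw [hKdef, abs_mul, abs_of_nonneg (by positivity : (0:ℝ) ≤ 2*π)]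
    nlinarith [mul_nonneg (by linarith : (0:ℝ) ≤ 2*π - 4) (by linarith : (0:ℝ) ≤ K - 3)]
  -- cast helpers
  have hcast1 : ∀ p : ℤ, |(p:ℝ) - (k:ℝ)| = ((|p - k| : ℤ) : ℝ) := by
    intro p; rw [Int.cast_abs]; push_cast; ring_nf
  have hcast2 : ∀ p : ℤ, |(p:ℝ) + (k:ℝ)| = ((|p + k| : ℤ) : ℝ) := by
    intro p; rw [Int.cast_abs]; push_cast; ring_nf
  -- main per-p lower bound on |y^n - x^n|
  have hinv1 : L⁻¹ ≤ 1 := by rw [inv_le_one_iff₀]; right; exact hlog1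
  have hyx : ∀ p : ℤ, p ∉ Aset n k t →
      (1 + dd k p)/L * (4*K)^(n-1) ≤ |(2*π*(p:ℝ) + t)^n - x^n| := by
    intro p hp
    have hpk : p ≠ k := fun h => hp (h ▸ k_mem_Aset n k t)
    set y := 2*π*(p:ℝ) + t with hydef
    have habs1 : |y - x| = 2*π*|(p:ℝ)-(k:ℝ)| := by
      rw [show y - x = 2*π*((p:ℝ) - (k:ℝ)) by rw [hydef, hxdef]; ring, abs_mul,
        abs_of_nonneg (by positivity : (0:ℝ) ≤ 2*π)]
    have hj1 : (1:ℝ) ≤ |(p:ℝ) - (k:ℝ)| := by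
      rw [hcast1 p]
      exact_mod_cast Int.one_le_abs (sub_ne_zero.2 hpk)
    have hdd1 : dd k p ≤ |(p:ℝ) - (k:ℝ)| := min_le_left _ _
    have hdd2 : dd k p ≤ |(p:ℝ) + (k:ℝ)| := min_le_right _ _
    have hdd0 := dd_nonneg k p
    have hdivL : (1 + dd k p)/L ≤ 1 + dd k p := div_le_self (by linarith) hlog1
    have hmaxpow : (4*K)^(n-1) ≤ max |x| |y| ^ (n-1) :=
      pow_le_pow_left₀ (by positivity) (le_trans hxlb (le_max_left _ _)) _
    have hstep1 : (1 + dd k p)/L ≤ 2*π*|(p:ℝ)-(k:ℝ)| := by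
      have h9 : 1 + |(p:ℝ)-(k:ℝ)| ≤ 2*π*|(p:ℝ)-(k:ℝ)| := by
        nlinarith [mul_nonneg (by linarith : (0:ℝ) ≤ 2*π-1)
          (by linarith : (0:ℝ) ≤ |(p:ℝ)-(k:ℝ)| - 1)]
      linarith
    rcases Nat.even_or_odd n with he | ho
    · have hkey := key_even n (by omega) he x y
      have hmain : (1 + dd k p)/L ≤ min |y - x| |y + x| := by
        refine le_min (by rw [habs1]; exact hstep1) ?_
        have hyx2 : y + x = 2*π*((p:ℝ)+(k:ℝ)) + 2*t := by rw [hydef, hxdef]; ring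
        have hno : ¬ Odd n := Nat.not_odd_iff_even.mpr he
        have hq : p + k ≤ -2 ∨ p + k = -1 ∨ p + k = 0 ∨ p + k = 1 ∨ 2 ≤ p + k := by omega
        have hfar : (2:ℝ) ≤ |(p:ℝ)+(k:ℝ)| → (1 + dd k p)/L ≤ |y + x| := by
          intro hQ
          have h1 : |2*π*((p:ℝ)+(k:ℝ))| ≤ |y+x| + |2*t| := by
            calc |2*π*((p:ℝ)+(k:ℝ))| = |(y+x) - 2*t| := by rw [hyx2]; ring_nf
              _ ≤ |y+x| + |2*t| := abs_sub _ _
          have h2 : |2*π*((p:ℝ)+(k:ℝ))| = 2*π*|(p:ℝ)+(k:ℝ)| := by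
            rw [abs_mul, abs_of_nonneg (by positivity : (0:ℝ) ≤ 2*π)]
          have h3 : |2*t| ≤ 3*π := by
            rw [abs_mul, abs_of_nonneg (by norm_num : (0:ℝ) ≤ 2)]; linarith
          have h4 : 1 + |(p:ℝ)+(k:ℝ)| ≤ 2*π*|(p:ℝ)+(k:ℝ)| - 3*π := by
            nlinarith [mul_nonneg (by linarith : (0:ℝ) ≤ 2*π-1)
              (by linarith : (0:ℝ) ≤ |(p:ℝ)+(k:ℝ)| - 2)]
          linarith
        rcases hq with h | h | h | h | h
        · exact hfar (by rw [hcast2 p]; exact_mod_cast le_abs.mpr (Or.inr (by omega : (2:ℤ) ≤ -(p+k))))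
        · -- q = -1 : p = -(k+1)
          have hp' : p = -(k+1) := by omega
          have htpi := not_mem_Aset_negk1 n k t hno (hLdef ▸ hlog1) (hp' ▸ hp)
          have h1 : y + x = 2*(t - π) := by
            rw [hyx2]
            have h0 : (p:ℝ) + (k:ℝ) = -1 := by exact_mod_cast h
            rw [h0]; ring
          have h2 : |y + x| = 2*|t - π| := by
            rw [h1, abs_mul, abs_of_nonneg (by norm_num : (0:ℝ) ≤ 2)]
          have h3 : dd k p ≤ 1 := by
            refine le_trans hdd2 ?_
            rw [hcast2 p]; exact_mod_cast abs_le.mpr ⟨by omega, by omega⟩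
          rw [h2]
          calc (1 + dd k p)/L ≤ 2/L := by gcongr; linarith
            _ = 2 * L⁻¹ := by rw [div_eq_mul_inv]
            _ ≤ 2 * |t - π| := by have := htpi; rw [hLdef] at *; linarith
        · -- q = 0 : p = -k
          have hp' : p = -k := by omega
          have htt := not_mem_Aset_neg n k t hno (hp' ▸ hp)
          have h1 : y + x = 2*t := by
            rw [hyx2]
            have h0 : (p:ℝ) + (k:ℝ) = 0 := by exact_mod_cast h
            rw [h0]; ring
          have h2 : |y + x| = 2*|t| := by
            rw [h1, abs_mul, abs_of_nonneg (by norm_num : (0:ℝ) ≤ 2)]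
          have h3 : dd k p ≤ 1 := by
            refine le_trans hdd2 ?_
            rw [hcast2 p]; exact_mod_cast abs_le.mpr ⟨by omega, by omega⟩
          rw [h2]
          calc (1 + dd k p)/L ≤ 2/L := by gcongr; linarith
            _ = 2 * L⁻¹ := by rw [div_eq_mul_inv]
            _ ≤ 2 * |t| := by have := htt; rw [hLdef] at *; linarith
        · -- q = 1
          have h1 : y + x = 2*π + 2*t := by
            rw [hyx2]
            have h0 : (p:ℝ) + (k:ℝ) = 1 := by exact_mod_cast h
            rw [h0]; ring
          have h2 : π ≤ |y + x| := by
            rw [h1]; refine le_trans (by linarith) (le_abs_self _)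
          have h3 : dd k p ≤ 1 := by
            refine le_trans hdd2 ?_
            rw [hcast2 p]; exact_mod_cast abs_le.mpr ⟨by omega, by omega⟩
          calc (1 + dd k p)/L ≤ 2/L := by gcongr; linarith
            _ = 2 * L⁻¹ := by rw [div_eq_mul_inv]
            _ ≤ π := by linarith
            _ ≤ |y + x| := h2
        · exact hfar (by rw [hcast2 p]; exact_mod_cast le_abs.mpr (Or.inl (by omega : (2:ℤ) ≤ p+k)))
      calc (1 + dd k p)/L * (4*K)^(n-1)
          ≤ min |y - x| |y + x| * max |x| |y| ^ (n-1) :=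
            mul_le_mul hmain hmaxpow (by positivity) (le_min (abs_nonneg _) (abs_nonneg _))
        _ ≤ |y^n - x^n| := hkey
    · have hkey := key_odd n (by omega) ho x y
      have hmain : (1 + dd k p)/L ≤ |y - x| / 2 := by
        rw [habs1]
        have h9 : 1 + |(p:ℝ)-(k:ℝ)| ≤ π*|(p:ℝ)-(k:ℝ)| := by
          nlinarith [mul_nonneg (by linarith : (0:ℝ) ≤ π-1)
            (by linarith : (0:ℝ) ≤ |(p:ℝ)-(k:ℝ)| - 1)]
        linarith
      have h5 : (1 + dd k p)/L * (4*K)^(n-1) ≤ (|y - x|/2) * max |x| |y| ^ (n-1) :=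
        mul_le_mul hmain hmaxpow (by positivity) (by positivity)
      have h6 : (|y - x|/2) * max |x| |y| ^ (n-1) = (|y - x| * max |x| |y| ^ (n-1))/2 := by ring
      linarith
  -- rpow comparison
  have hrpow : c₁ * K ^ ((n:ℝ) - 1 - 1/(2*(m:ℝ))) ≤ (1/L) * (4*K)^(n-1) / 2 := by
    have hA0 : (0:ℝ) ≤ K^(n-1) := by positivity
    have hR0 : (0:ℝ) < K ^ (1/(2*(m:ℝ))) := Real.rpow_pos_of_pos hK0 _
    have hα : K ^ ((n:ℝ) - 1 - 1/(2*(m:ℝ))) = K^(n-1) / K ^ (1/(2*(m:ℝ))) := by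
      have hcst : (n:ℝ) - 1 = ((n-1 : ℕ) : ℝ) := by
        push_cast [Nat.cast_sub (by omega : 1 ≤ n)]; ring
      rw [show (n:ℝ) - 1 - 1/(2*(m:ℝ)) = ((n:ℝ)-1) - 1/(2*(m:ℝ)) by ring,
        Real.rpow_sub hK0, hcst, Real.rpow_natCast]
    have h4A : 4*K^(n-1) ≤ (4*K)^(n-1) := by
      rw [mul_pow]
      have h44 : (4:ℝ) ≤ 4^(n-1) := le_self_pow₀ (by norm_num) (by omega)
      nlinarith
    have h1 : c₁ * (K^(n-1) / K ^ (1/(2*(m:ℝ)))) ≤ 2 * K^(n-1) / L := by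
      rw [mul_div_assoc', div_le_div_iff₀ hR0 hL0]
      nlinarith [mul_le_mul_of_nonneg_right hcond hA0]
    calc c₁ * K ^ ((n:ℝ) - 1 - 1/(2*(m:ℝ))) = c₁ * (K^(n-1) / K ^ (1/(2*(m:ℝ)))) := by rw [hα]
      _ ≤ 2*K^(n-1)/L := h1
      _ = (1/L) * (4*K^(n-1)) / 2 := by field_simp; ring
      _ ≤ (1/L) * (4*K)^(n-1) / 2 := by gcongr
  -- triangle step
  have hcabs : ∀ p : ℤ, p ∉ Aset n k t →
      (1 + dd k p)/L * (4*K)^(n-1) ≤ 2 * ‖lam - ((2*π*(p:ℝ) + t : ℝ) : ℂ)^n‖ := by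
    intro p hp
    have h1 := hyx p hp
    set y := 2*π*(p:ℝ) + t with hydef
    have htri : |y^n - x^n| ≤
        ‖lam - ((y:ℝ):ℂ)^n‖ + ‖lam - ((x:ℝ):ℂ)^n‖ := by
      calc |y^n - x^n| = ‖((y:ℝ):ℂ)^n - ((x:ℝ):ℂ)^n‖ := by
            rw [show ((y:ℝ):ℂ)^n - ((x:ℝ):ℂ)^n = (((y^n - x^n : ℝ)):ℂ) by push_cast; ring,
              Complex.norm_real, Real.norm_eq_abs]
        _ ≤ ‖((y:ℝ):ℂ)^n - lam‖ + ‖lam - ((x:ℝ):ℂ)^n‖ :=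
            norm_sub_le_norm_sub_add_norm_sub _ _ _
        _ = ‖lam - ((y:ℝ):ℂ)^n‖ + ‖lam - ((x:ℝ):ℂ)^n‖ := by
            rw [norm_sub_rev]
    have h2 : ‖lam - ((x:ℝ):ℂ)^n‖ ≤ c₁ * K ^ ((n:ℝ)-1-1/(2*(m:ℝ))) := hlam
    have h3 : (1:ℝ)/L * (4*K)^(n-1) ≤ (1 + dd k p)/L * (4*K)^(n-1) := by
      gcongr
      linarith [dd_nonneg k p]
    linarith
  -- per-term bound
  have hterm : ∀ p : ℤ, p ∉ Aset n k t →
      K^(2*n-4) / ‖lam - ((2*π*(p:ℝ) + t : ℝ) : ℂ)^n‖^2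
        ≤ L^2/K^2 * ((1 + dd k p)⁻¹)^2 := by
    intro p hp
    have hB := hcabs p hp
    set c := ‖lam - ((2*π*(p:ℝ) + t : ℝ) : ℂ)^n‖ with hcdef
    have hdd0 := dd_nonneg k p
    have hBpos : (0:ℝ) < (1 + dd k p)/L * (4*K)^(n-1) := by positivity
    have hc0 : (0:ℝ) < c := by nlinarith
    have h1 : ((1 + dd k p)/L * (4*K)^(n-1)/2)^2 ≤ c^2 :=
      pow_le_pow_left₀ (by positivity) (by linarith) 2
    have h2 : K^(2*n-4)/c^2 ≤ K^(2*n-4)/(((1 + dd k p)/L * (4*K)^(n-1)/2)^2) :=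
      div_le_div_of_nonneg_left (by positivity) (by positivity) h1
    refine h2.trans ?_
    rw [div_le_iff₀ (by positivity)]
    have hexp : ((4*K)^(n-1))^2 = 4^(2*n-4) * 16 * (K^(2*n-4) * K^2) := by
      have e : (n-1)*2 = (2*n-4) + 2 := by omega
      rw [← pow_mul, mul_pow, e, pow_add, pow_add]
      norm_num
    have h1p : (1 + dd k p) ≠ 0 := by positivity
    have e2 : ((1 + dd k p)/L*(4*K)^(n-1)/2)^2
        = (1 + dd k p)^2/L^2 * (((4*K)^(n-1))^2)/4 := by ring
    have hRHSeq : L^2/K^2*((1 + dd k p)⁻¹)^2 * ((1 + dd k p)/L*(4*K)^(n-1)/2)^2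
        = 4^(2*n-4) * 4 * K^(2*n-4) := by
      rw [e2, hexp]
      field_simp
      ring
    rw [hRHSeq]
    have h16 : (1:ℝ) ≤ 4^(2*n-4) := one_le_pow₀ (by norm_num)
    nlinarith [pow_nonneg hK0.le (2*n-4)]
  -- summability of comparison functions
  have hs1 : Summable (fun p : ℤ => ((1 + |(p:ℝ) - (k:ℝ)|)⁻¹)^2) := by
    have h := ((Equiv.subRight k).summable_iff
      (f := fun q : ℤ => ((1 + |(q:ℝ)|)⁻¹)^2)).mpr base_summable
    refine h.congr fun p => ?_
    simp only [Function.comp_apply, Equiv.subRight_apply]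
    push_cast
    ring_nf
  have hs2 : Summable (fun p : ℤ => ((1 + |(p:ℝ) + (k:ℝ)|)⁻¹)^2) := by
    have h := ((Equiv.subRight (-k)).summable_iff
      (f := fun q : ℤ => ((1 + |(q:ℝ)|)⁻¹)^2)).mpr base_summable
    refine h.congr fun p => ?_
    simp only [Function.comp_apply, Equiv.subRight_apply, sub_neg_eq_add]
    push_cast
    ring_nf
  have hsub : ∀ p : ℤ, ((1 + dd k p)⁻¹)^2
      ≤ ((1 + |(p:ℝ) - (k:ℝ)|)⁻¹)^2 + ((1 + |(p:ℝ) + (k:ℝ)|)⁻¹)^2 := by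
    intro p
    rcases le_total |(p:ℝ) - (k:ℝ)| |(p:ℝ) + (k:ℝ)| with h | h
    · rw [show dd k p = |(p:ℝ) - (k:ℝ)| from min_eq_left h]
      have h0 : (0:ℝ) ≤ ((1 + |(p:ℝ) + (k:ℝ)|)⁻¹)^2 := by positivity
      linarith
    · rw [show dd k p = |(p:ℝ) + (k:ℝ)| from min_eq_right h]
      have h0 : (0:ℝ) ≤ ((1 + |(p:ℝ) - (k:ℝ)|)⁻¹)^2 := by positivity
      linarith
  have hsumdd : Summable (fun p : ℤ => ((1 + dd k p)⁻¹)^2) :=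
    Summable.of_nonneg_of_le (fun p => by positivity) hsub (hs1.add hs2)
  have hg : Summable (fun p : ℤ => L^2/K^2 * ((1 + dd k p)⁻¹)^2) := hsumdd.mul_left _
  have hgs : Summable ((fun p : ℤ => L^2/K^2 * ((1 + dd k p)⁻¹)^2) ∘
      (Subtype.val : {p : ℤ // p ∉ Aset n k t} → ℤ)) := hg.subtype _
  have hptle : ∀ p : {p : ℤ // p ∉ Aset n k t},
      K^(2*n-4) / ‖lam - ((2*π*(p.1:ℝ) + t : ℝ) : ℂ)^n‖^2
        ≤ L^2/K^2 * ((1 + dd k p.1)⁻¹)^2 := fun p => hterm p.1 p.2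
  have hsummable : Summable (fun p : {p : ℤ // p ∉ Aset n k t} =>
      K^(2*n-4) / ‖lam - ((2*π*(p.1:ℝ) + t : ℝ) : ℂ)^n‖^2) :=
    Summable.of_nonneg_of_le (fun p => by positivity) hptle hgs
  refine ⟨hsummable, ?_⟩
  have hSeq1 : (∑' p : ℤ, ((1 + |(p:ℝ) - (k:ℝ)|)⁻¹)^2) = S := by
    rw [hSdef, ← Equiv.tsum_eq (Equiv.subRight k) (fun q : ℤ => ((1 + |(q:ℝ)|)⁻¹)^2)]
    exact tsum_congr fun p => by
      simp only [Equiv.subRight_apply]; push_cast; ring_nf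
  have hSeq2 : (∑' p : ℤ, ((1 + |(p:ℝ) + (k:ℝ)|)⁻¹)^2) = S := by
    rw [hSdef, ← Equiv.tsum_eq (Equiv.subRight (-k)) (fun q : ℤ => ((1 + |(q:ℝ)|)⁻¹)^2)]
    exact tsum_congr fun p => by
      simp only [Equiv.subRight_apply, sub_neg_eq_add]; push_cast; ring_nf
  have hddS : (∑' p : ℤ, ((1 + dd k p)⁻¹)^2) ≤ 2*S := by
    calc (∑' p : ℤ, ((1 + dd k p)⁻¹)^2)
        ≤ ∑' p : ℤ, (((1 + |(p:ℝ) - (k:ℝ)|)⁻¹)^2 + ((1 + |(p:ℝ) + (k:ℝ)|)⁻¹)^2) :=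
          Summable.tsum_le_tsum hsub hsumdd (hs1.add hs2)
      _ = S + S := by rw [Summable.tsum_add hs1 hs2, hSeq1, hSeq2]
      _ = 2*S := by ring
  have hK2 : K^2 = (k:ℝ)^2 := sq_abs _
  have hLK0 : (0:ℝ) ≤ L^2/K^2 := by positivity
  calc (∑' p : {p : ℤ // p ∉ Aset n k t},
          K^(2*n-4) / ‖lam - ((2*π*(p.1:ℝ) + t : ℝ) : ℂ)^n‖^2)
      ≤ ∑' p : {p : ℤ // p ∉ Aset n k t}, L^2/K^2 * ((1 + dd k p.1)⁻¹)^2 :=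
        Summable.tsum_le_tsum hptle hsummable hgs
    _ ≤ ∑' p : ℤ, L^2/K^2 * ((1 + dd k p)⁻¹)^2 :=
        Summable.tsum_le_tsum_of_inj Subtype.val Subtype.val_injective (fun c _ => by positivity)
          (fun b => le_rfl) hgs hg
    _ = L^2/K^2 * ∑' p : ℤ, ((1 + dd k p)⁻¹)^2 := tsum_mul_left
    _ ≤ L^2/K^2 * (2*S) := mul_le_mul_of_nonneg_left hddS hLK0
    _ ≤ (2*S+1) * L^2 / (k:ℝ)^2 := by
        rw [← hK2]
        have he : (2*S+1) * L^2 / K^2 = (2*S+1) * (L^2/K^2) := by ring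
        rw [he]
        nlinarith
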